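/- arXiv:1302.6191 — 2 statements merged into one kernel-verified Lean document; each statement's English description precedes it below -/
import Mathlib

section
/- Let n = 2m + 1 be an odd positive integer and let p be a real polynomial of degree at most n with sup_{x ∈ [−1,1]} |p(x)| ≤ 1. Then p'(0) ≤ n. -/
open Polynomial Finset Real


lemma natDegree_T_pair : ∀ k : ℕ, (Polynomial.Chebyshev.T ℝ k).natDegree ≤ k ∧
    (Polynomial.Chebyshev.T ℝ (k+1)).natDegree ≤ k+1 := by
  intro k
  induction k with
  | zero => simp [Polynomial.Chebyshev.T_zero, Polynomial.Chebyshev.T_one, natDegree_X_le]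
  | succ k ih =>
    refine ⟨ih.2, ?_⟩
    push_cast
    rw [show ((k:ℤ)+1+1) = (k:ℤ) + 2 by ring, Polynomial.Chebyshev.T_add_two]
    refine le_trans (natDegree_sub_le _ _) (max_le ?_ (ih.1.trans (by omega)))
    refine le_trans (natDegree_mul_le) ?_
    have h1 : ((2 : ℝ[X]) * X).natDegree ≤ 1 :=
      le_trans natDegree_mul_le (by simp [natDegree_X_le])
    have h2 : (Polynomial.Chebyshev.T ℝ ((k:ℤ)+1)).natDegree ≤ k + 1 := by exact_mod_cast ih.2
    omega

lemma T_coeff_pair : ∀ k : ℕ, (Polynomial.Chebyshev.T ℝ (2*k)).coeff 0 = (-1)^k ∧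
    (Polynomial.Chebyshev.T ℝ (2*k+1)).coeff 1 = (-1)^k * (2*k+1) := by
  intro k
  induction k with
  | zero => simp [Polynomial.Chebyshev.T_zero, Polynomial.Chebyshev.T_one]
  | succ k ih =>
    have hC : (2 : ℝ[X]) = C 2 := (map_ofNat C 2).symm
    constructor
    · push_cast
      rw [show (2*((k:ℤ)+1)) = (2*(k:ℤ)) + 2 by ring, Polynomial.Chebyshev.T_add_two]
      rw [coeff_sub, hC, mul_assoc, coeff_C_mul]
      simp only [mul_coeff_zero, coeff_X_zero, zero_mul, mul_zero, zero_sub]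
      push_cast
      rw [ih.1]
      ring
    · push_cast
      rw [show (2*((k:ℤ)+1)+1) = (2*(k:ℤ)+1) + 2 by ring, Polynomial.Chebyshev.T_add_two]
      rw [coeff_sub, hC, mul_assoc, coeff_C_mul, coeff_X_mul]
      push_cast
      rw [ih.2, show (2*(k:ℤ)+1+1) = (2*(k:ℤ)) + 2 by ring, Polynomial.Chebyshev.T_add_two]
      rw [coeff_sub, hC, mul_assoc, coeff_C_mul]
      simp only [mul_coeff_zero, coeff_X_zero, zero_mul, mul_zero, zero_sub]
      rw [ih.1]
      ring


noncomputable def cc (m : ℕ) : ℕ → ℝ := fun j => Real.cos ((j:ℝ) * π / (2*(m:ℝ)+1))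
noncomputable def tt (m : ℕ) : ℕ → ℝ := fun j => (cc m j)^2

-- basic node facts
lemma cc_pos {m j : ℕ} (hj : j ≤ m) : 0 < cc m j := by
  have hπ := Real.pi_pos
  apply Real.cos_pos_of_mem_Ioo
  constructor
  · have : 0 ≤ (j:ℝ) * π / (2*(m:ℝ)+1) := by positivity
    linarith
  · rw [div_lt_iff₀ (by positivity)]
    have h1 : (j:ℝ) ≤ m := by exact_mod_cast hj
    nlinarith

lemma cc_le_one (m j : ℕ) : cc m j ≤ 1 := Real.cos_le_one _

lemma cc_anti {m i j : ℕ} (hj : j ≤ m) (hij : i < j) : cc m j < cc m i := by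
  have hπ := Real.pi_pos
  have hd : (0:ℝ) < 2*(m:ℝ)+1 := by positivity
  apply Real.cos_lt_cos_of_nonneg_of_le_pi
  · positivity
  · rw [div_le_iff₀ hd]
    have h1 : (j:ℝ) ≤ m := by exact_mod_cast hj
    nlinarith
  · apply div_lt_div_of_pos_right ?_ hd
    have hi : (i:ℝ) < j := by exact_mod_cast hij
    nlinarith

section part2
variable {m : ℕ}

lemma tt_anti {m i j : ℕ} (hj : j ≤ m) (hij : i < j) : tt m j < tt m i := by
  have h1 := cc_pos hj
  have h2 := cc_anti hj hij
  simp only [tt]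
  nlinarith

lemma tt_inj : Set.InjOn (tt m) (Finset.range (m+1)) := by
  intro i hi j hj hij
  simp only [coe_range, Set.mem_Iio] at hi hj
  by_contra hne
  rcases lt_or_gt_of_ne hne with h | h
  · exact absurd hij (ne_of_gt (tt_anti (by omega) h))
  · exact absurd hij (ne_of_lt (tt_anti (by omega) h))

-- odd-part lemma
lemma odd_part (p : ℝ[X]) (hdeg : p.natDegree ≤ 2*m+1) (x : ℝ) :
    x * (∑ j ∈ Finset.range (m+1), C (p.coeff (2*j+1)) * X^j).eval (x^2)
      = (p.eval x - p.eval (-x))/2 := by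
  have hev : ∀ y : ℝ, p.eval y = ∑ i ∈ Finset.range (2*m+2), p.coeff i * y^i := fun y =>
    eval_eq_sum_range' (by omega) y
  have hL : x * (∑ j ∈ Finset.range (m+1), C (p.coeff (2*j+1)) * X^j).eval (x^2)
      = ∑ j ∈ Finset.range (m+1), p.coeff (2*j+1) * ((x^(2*j+1) - (-x)^(2*j+1))/2) := by
    rw [eval_finset_sum, Finset.mul_sum]
    refine Finset.sum_congr rfl fun j _ => ?_
    have hodd : Odd (2*j+1) := ⟨j, by ring⟩
    rw [hodd.neg_pow]
    simp only [eval_mul, eval_C, eval_pow, eval_X]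
    rw [← pow_mul]
    ring_nf
  rw [hL, hev x, hev (-x), ← Finset.sum_sub_distrib, Finset.sum_div]
  have hre : ∑ i ∈ Finset.range (2*m+2), (p.coeff i * x^i - p.coeff i * (-x)^i)/2
      = ∑ i ∈ Finset.range (2*m+2), p.coeff i * ((x^i - (-x)^i)/2) := by
    refine Finset.sum_congr rfl fun i _ => by ring
  rw [hre]
  rw [← Finset.sum_image (f := fun i => p.coeff i * ((x^i - (-x)^i)/2))
    (g := fun j => 2*j+1) (by intro a _ b _ h; simp only at h; omega)]
  apply Finset.sum_subset
  · intro i hi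
    simp only [Finset.mem_image, Finset.mem_range] at hi ⊢
    obtain ⟨j, hj, rfl⟩ := hi
    omega
  · intro i hi hni
    simp only [Finset.mem_image, Finset.mem_range] at hi hni
    rcases Nat.even_or_odd i with he | ho
    · rw [he.neg_pow]
      ring
    · obtain ⟨k, hk⟩ := ho
      exact absurd ⟨k, by omega, by omega⟩ hni

end part2

section part3
open Polynomial.Chebyshev

lemma cos_nat_pi (j : ℕ) : Real.cos ((j:ℝ) * π) = (-1:ℝ)^j := by
  have h := Real.cos_nat_mul_pi_sub 0 j
  simpa using h

lemma T_eval_cc (m j : ℕ) : (T ℝ (2*(m:ℤ)+1)).eval (cc m j) = (-1:ℝ)^j := by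
  have hd : (0:ℝ) < 2*(m:ℝ)+1 := by positivity
  rw [cc, T_real_cos]
  rw [show ((2*(m:ℤ)+1 : ℤ) : ℝ) * ((j:ℝ) * π / (2*(m:ℝ)+1)) = (j:ℝ)*π by
    push_cast; field_simp]
  exact cos_nat_pi j

lemma T_eval_neg_cc (m j : ℕ) : (T ℝ (2*(m:ℤ)+1)).eval (-(cc m j)) = -((-1:ℝ)^j) := by
  have hd : (0:ℝ) < 2*(m:ℝ)+1 := by positivity
  rw [cc, ← Real.cos_pi_sub, T_real_cos]
  rw [show ((2*(m:ℤ)+1 : ℤ) : ℝ) * (π - (j:ℝ) * π / (2*(m:ℝ)+1))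
      = ((2*m+1 : ℕ):ℝ)*π - (j:ℝ)*π by push_cast; field_simp]
  rw [Real.cos_nat_mul_pi_sub, cos_nat_pi]
  have : ((-1:ℝ))^(2*m+1) = -1 := by
    rw [pow_succ, pow_mul]; norm_num
  rw [this]; ring

lemma T_eval_zero (m : ℕ) : (T ℝ (2*(m:ℤ)+1)).eval 0 = 0 := by
  rw [show (0:ℝ) = Real.cos (π/2) by simp, T_real_cos]
  rw [show ((2*(m:ℤ)+1 : ℤ) : ℝ) * (π/2) = (m:ℝ)*π + π/2 by push_cast; ring]
  rw [Real.cos_add]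
  simp [Real.sin_nat_mul_pi]

end part3

section part4
open Polynomial.Chebyshev

lemma phi_eval_zero (m : ℕ) :
    (Lagrange.interpolate (Finset.range (m+1)) (tt m) (fun j => (-1:ℝ)^j / cc m j)).eval 0
      = (-1:ℝ)^m * (2*m+1) := by
  classical
  set s : Finset ℕ := Finset.range (m+1) with hs
  set φ : ℝ[X] := Lagrange.interpolate s (tt m) (fun j => (-1:ℝ)^j / cc m j) with hφ
  have hφdeg : φ.natDegree ≤ m := by
    have h := Lagrange.degree_interpolate_lt (s := s) (v := tt m)
      (r := fun j => (-1:ℝ)^j / cc m j) tt_inj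
    rw [Finset.card_range] at h
    by_cases h0 : φ = 0
    · simp [h0]
    · have := (Polynomial.natDegree_lt_iff_degree_lt (n := m+1) h0).mpr h
      omega
  set ψ : ℝ[X] := X * φ.comp (X^2) with hψ
  have hψeval : ∀ x : ℝ, ψ.eval x = x * φ.eval (x^2) := by
    intro x; simp [hψ, eval_comp]
  have hφnode : ∀ j ∈ s, φ.eval (tt m j) = (-1:ℝ)^j / cc m j := fun j hj =>
    Lagrange.eval_interpolate_at_node _ tt_inj hj
  -- the point set
  set P : Finset ℝ := insert (0:ℝ) ((s.image (cc m)) ∪ (s.image (fun j => -(cc m j)))) with hP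
  have hccinj : Set.InjOn (cc m) s := by
    intro i hi j hj hij
    simp only [hs, coe_range, Set.mem_Iio] at hi hj
    by_contra hne
    rcases lt_or_gt_of_ne hne with h | h
    · exact absurd hij (ne_of_gt (cc_anti (by omega) h))
    · exact absurd hij (ne_of_lt (cc_anti (by omega) h))
  have hnccinj : Set.InjOn (fun j => -(cc m j)) s := fun i hi j hj hij =>
    hccinj hi hj (by linarith [neg_injective hij])
  have hposmem : ∀ x ∈ s.image (cc m), 0 < x := by
    intro x hx
    simp only [Finset.mem_image, hs, Finset.mem_range] at hx
    obtain ⟨j, hj, rfl⟩ := hx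
    exact cc_pos (by omega)
  have hnegmem : ∀ x ∈ s.image (fun j => -(cc m j)), x < 0 := by
    intro x hx
    simp only [Finset.mem_image, hs, Finset.mem_range] at hx
    obtain ⟨j, hj, rfl⟩ := hx
    simpa using cc_pos (m := m) (by omega)
  have hdisj : Disjoint (s.image (cc m)) (s.image (fun j => -(cc m j))) := by
    rw [Finset.disjoint_left]
    intro a ha hb
    exact absurd (hposmem a ha) (not_lt.mpr (hnegmem a hb).le)
  have hcard : P.card = 2*m+3 := by
    rw [hP, Finset.card_insert_of_notMem, Finset.card_union_of_disjoint hdisj,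
      Finset.card_image_of_injOn hccinj, Finset.card_image_of_injOn hnccinj]
    · rw [hs, Finset.card_range]; omega
    · intro h0
      rcases Finset.mem_union.mp h0 with h | h
      · exact absurd (hposmem 0 h) (lt_irrefl 0)
      · exact absurd (hnegmem 0 h) (lt_irrefl 0)
  have hvanish : ∀ x ∈ P, (T ℝ (2*(m:ℤ)+1) - ψ).eval x = 0 := by
    intro x hx
    rw [eval_sub, hψeval, sub_eq_zero]
    rcases Finset.mem_insert.mp hx with rfl | hx
    · rw [_root_.T_eval_zero]; ring
    rcases Finset.mem_union.mp hx with h | h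
    · simp only [Finset.mem_image] at h
      obtain ⟨j, hj, rfl⟩ := h
      have hjm : j ≤ m := by
        have := Finset.mem_range.mp (hs ▸ hj); omega
      rw [T_eval_cc, show (cc m j)^2 = tt m j from rfl, hφnode j hj]
      field_simp [(cc_pos hjm).ne']
    · simp only [Finset.mem_image] at h
      obtain ⟨j, hj, rfl⟩ := h
      have hjm : j ≤ m := by
        have := Finset.mem_range.mp (hs ▸ hj); omega
      rw [T_eval_neg_cc, show ((-(cc m j))^2) = tt m j by rw [neg_sq]; rfl, hφnode j hj]
      field_simp [(cc_pos hjm).ne']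
  have hTψ : T ℝ (2*(m:ℤ)+1) = ψ := by
    have hz : T ℝ (2*(m:ℤ)+1) - ψ = 0 := by
      apply Polynomial.eq_zero_of_natDegree_lt_card_of_eval_eq_zero' _ P hvanish
      rw [hcard]
      have hT : (T ℝ (2*(m:ℤ)+1)).natDegree ≤ 2*m+1 := by
        have h := (natDegree_T_pair (2*m+1)).1
        rwa [show ((2*m+1 : ℕ) : ℤ) = 2*(m:ℤ)+1 by push_cast; ring] at h
      have hψd : ψ.natDegree ≤ 2*m+1 := by
        rw [hψ]
        refine le_trans natDegree_mul_le ?_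
        have := natDegree_comp (p := φ) (q := (X^2 : ℝ[X]))
        have hx2 : (X^2 : ℝ[X]).natDegree = 2 := by simp [natDegree_X_pow]
        have : (φ.comp (X^2)).natDegree ≤ 2*m := by
          rw [natDegree_comp, hx2]; omega
        have hX : (X : ℝ[X]).natDegree ≤ 1 := natDegree_X_le
        omega
      have := Polynomial.natDegree_sub_le (T ℝ (2*(m:ℤ)+1)) ψ
      omega
    exact sub_eq_zero.mp hz
  -- now compare coefficient 1
  have hc1 : ((T ℝ (2*(m:ℤ)+1)).coeff 1 : ℝ) = ψ.coeff 1 := by rw [hTψ]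
  have hcT : (T ℝ (2*(m:ℤ)+1)).coeff 1 = (-1:ℝ)^m * (2*m+1) := by
    have := (T_coeff_pair m).2
    push_cast at this ⊢
    convert this using 2
  have hcψ : ψ.coeff 1 = φ.eval 0 := by
    rw [hψ, coeff_X_mul, coeff_zero_eq_eval_zero, eval_comp]
    norm_num
  calc φ.eval 0 = ψ.coeff 1 := hcψ.symm
    _ = (T ℝ (2*(m:ℤ)+1)).coeff 1 := hc1.symm
    _ = (-1:ℝ)^m * (2*m+1) := hcT

end part4

section part5

lemma basis_eval_zero (m j : ℕ) (hj : j ∈ Finset.range (m+1)) :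
    (Lagrange.basis (Finset.range (m+1)) (tt m) j).eval 0
      = ∏ i ∈ (Finset.range (m+1)).erase j, (tt m i / (tt m i - tt m j)) := by
  rw [Lagrange.basis, eval_prod]
  refine Finset.prod_congr rfl fun i hi => ?_
  have hij : i ≠ j := (Finset.mem_erase.mp hi).1
  have him : i ≤ m := by have := Finset.mem_range.mp (Finset.mem_erase.mp hi).2; omega
  have hjm : j ≤ m := by have := Finset.mem_range.mp hj; omega
  have hne : tt m i ≠ tt m j := by
    rcases lt_or_gt_of_ne hij with h | h
    · exact (tt_anti hjm h).ne'
    · exact (tt_anti him h).ne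
  simp only [Lagrange.basisDivisor, eval_mul, eval_C, eval_sub, eval_X]
  rw [div_eq_mul_inv]
  rw [show (tt m i - tt m j)⁻¹ = -((tt m j - tt m i)⁻¹) by
    rw [show tt m i - tt m j = -(tt m j - tt m i) by ring, inv_neg]]
  ring

lemma basis_sign (m j : ℕ) (hj : j ∈ Finset.range (m+1)) :
    (-1:ℝ)^(m+j) * (Lagrange.basis (Finset.range (m+1)) (tt m) j).eval 0
      = |(Lagrange.basis (Finset.range (m+1)) (tt m) j).eval 0| := by
  have hjm : j ≤ m := by have := Finset.mem_range.mp hj; omega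
  set A := (Finset.range (m+1)).erase j with hA
  set g : ℕ → ℝ := fun i => tt m i / (tt m i - tt m j) with hg
  rw [basis_eval_zero m j hj]
  have hsplit : ∀ i ∈ A, g i = (if j < i then (-1:ℝ) else 1) * |g i| := by
    intro i hi
    have hij : i ≠ j := (Finset.mem_erase.mp hi).1
    have him : i ≤ m := by have := Finset.mem_range.mp (Finset.mem_erase.mp hi).2; omega
    have hpos : 0 < tt m i := by
      have := cc_pos (m := m) (j := i) him
      simp only [tt]; positivity
    rcases lt_or_gt_of_ne hij with h | h
    · -- i < j : t i > t j, g i > 0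
      have hgt := tt_anti hjm h
      have : 0 < g i := div_pos hpos (by linarith)
      rw [if_neg (by omega), abs_of_pos this, one_mul]
    · -- j < i : t i < t j, g i < 0
      have hlt := tt_anti him h
      have : g i < 0 := div_neg_of_pos_of_neg hpos (by linarith)
      rw [if_pos h, abs_of_neg this]; ring
  have hfilter : A.filter (fun i => j < i) = Finset.Ioo j (m+1) := by
    ext i
    simp only [hA, Finset.mem_filter, Finset.mem_erase, Finset.mem_range, Finset.mem_Ioo]
    omega
  have hsignprod : ∏ i ∈ A, (if j < i then (-1:ℝ) else 1) = (-1:ℝ)^(m-j) := by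
    rw [Finset.prod_ite, Finset.prod_const, Finset.prod_const, one_pow, mul_one, hfilter,
      Nat.card_Ioo]
    congr 1
    omega
  have h1 : ∏ i ∈ A, g i = (-1:ℝ)^(m-j) * ∏ i ∈ A, |g i| := by
    rw [Finset.prod_congr rfl hsplit, Finset.prod_mul_distrib, hsignprod]
  rw [h1, abs_mul, abs_pow, abs_neg, abs_one, one_pow, one_mul,
    abs_of_nonneg (Finset.prod_nonneg fun i _ => abs_nonneg (g i)),
    ← mul_assoc, ← pow_add, show (m+j) + (m-j) = 2*m by omega, pow_mul]
  norm_num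

end part5

theorem stmt11 (m n : ℕ) (hn : n = 2 * m + 1) (p : Polynomial ℝ)
    (hdeg : p.natDegree ≤ n)
    (hbound : ∀ x ∈ Set.Icc (-1 : ℝ) 1, |p.eval x| ≤ 1) :
    p.derivative.eval 0 ≤ n := by
  subst hn
  set s : Finset ℕ := Finset.range (m+1) with hs
  set r : ℝ[X] := ∑ j ∈ s, C (p.coeff (2*j+1)) * X^j with hr
  have hd1 : p.derivative.eval 0 = p.coeff 1 := by
    rw [← coeff_zero_eq_eval_zero, coeff_derivative]; norm_num
  have hr0 : r.eval 0 = p.coeff 1 := by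
    rw [hr, eval_finset_sum]
    simp only [eval_mul, eval_C, eval_pow, eval_X]
    rw [Finset.sum_eq_single 0 (fun j _ hj => by simp [zero_pow hj])
      (fun h => absurd (Finset.mem_range.mpr (by omega)) h)]
    simp
  have hval : ∀ j ∈ s, |r.eval (tt m j)| ≤ 1 / cc m j := by
    intro j hj
    have hjm : j ≤ m := by have := Finset.mem_range.mp (hs ▸ hj); omega
    have hcp := cc_pos (m := m) (j := j) hjm
    have hc1 := cc_le_one m j
    have hmem : cc m j ∈ Set.Icc (-1:ℝ) 1 := ⟨by linarith, hc1⟩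
    have hmem' : -(cc m j) ∈ Set.Icc (-1:ℝ) 1 := ⟨by linarith, by linarith⟩
    have hop := odd_part p hdeg (cc m j)
    have h1 := hbound _ hmem
    have h2 := hbound _ hmem'
    rw [le_div_iff₀ hcp]
    have : |r.eval (tt m j)| * cc m j = |cc m j * r.eval ((cc m j)^2)| := by
      rw [show tt m j = (cc m j)^2 from rfl, abs_mul, abs_of_pos hcp]; ring
    rw [this, hr, hs, hop, abs_div, abs_two, div_le_one (by norm_num : (0:ℝ) < 2), abs_le]
    have h1' := abs_le.mp h1
    have h2' := abs_le.mp h2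
    constructor <;> linarith
  have hrdeg : r.degree < (#s : WithBot ℕ) := by
    rw [hr]
    refine lt_of_le_of_lt (degree_sum_le _ _) ?_
    rw [Finset.sup_lt_iff (by rw [hs, Finset.card_range]; exact WithBot.bot_lt_coe _)]
    intro j hj
    refine lt_of_le_of_lt (degree_C_mul_X_pow_le j _) ?_
    rw [hs, Finset.card_range]
    exact_mod_cast Finset.mem_range.mp (hs ▸ hj)
  have hinterp : r.eval 0 = ∑ j ∈ s, r.eval (tt m j) * (Lagrange.basis s (tt m) j).eval 0 := by
    conv_lhs => rw [Lagrange.eq_interpolate tt_inj hrdeg]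
    rw [Lagrange.interpolate_apply, eval_finset_sum]
    simp only [eval_mul, eval_C]
    rfl
  have hφ0 : (Lagrange.interpolate s (tt m) (fun j => (-1:ℝ)^j / cc m j)).eval 0
      = ∑ j ∈ s, ((-1:ℝ)^j / cc m j) * (Lagrange.basis s (tt m) j).eval 0 := by
    rw [Lagrange.interpolate_apply, eval_finset_sum]
    simp only [eval_mul, eval_C]
  have hchain : r.eval 0 ≤ ((2*m+1 : ℕ) : ℝ) := by
    calc r.eval 0 = ∑ j ∈ s, r.eval (tt m j) * (Lagrange.basis s (tt m) j).eval 0 := hinterp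
      _ ≤ ∑ j ∈ s, (1 / cc m j) * |(Lagrange.basis s (tt m) j).eval 0| := by
          refine Finset.sum_le_sum fun j hj => ?_
          have hjm : j ≤ m := by have := Finset.mem_range.mp (hs ▸ hj); omega
          have hcp := cc_pos (m := m) (j := j) hjm
          calc r.eval (tt m j) * (Lagrange.basis s (tt m) j).eval 0
              ≤ |r.eval (tt m j) * (Lagrange.basis s (tt m) j).eval 0| := le_abs_self _
            _ = |r.eval (tt m j)| * |(Lagrange.basis s (tt m) j).eval 0| := abs_mul _ _
            _ ≤ (1 / cc m j) * |(Lagrange.basis s (tt m) j).eval 0| :=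
                mul_le_mul_of_nonneg_right (hval j hj) (abs_nonneg _)
      _ = ∑ j ∈ s, (1 / cc m j) * ((-1:ℝ)^(m+j) * (Lagrange.basis s (tt m) j).eval 0) := by
          refine Finset.sum_congr rfl fun j hj => ?_
          rw [basis_sign m j (hs ▸ hj)]
      _ = (-1:ℝ)^m * ∑ j ∈ s, ((-1:ℝ)^j / cc m j) * (Lagrange.basis s (tt m) j).eval 0 := by
          rw [Finset.mul_sum]
          refine Finset.sum_congr rfl fun j hj => ?_
          rw [pow_add]
          ring
      _ = (-1:ℝ)^m * ((-1:ℝ)^m * (2*m+1)) := by rw [← hφ0, phi_eval_zero]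
      _ = ((2*m+1 : ℕ) : ℝ) := by
          rw [← mul_assoc, ← pow_add, ← two_mul, pow_mul]
          push_cast
          norm_num
  rw [hd1, ← hr0]
  exact hchain
end

section
/- Let p be a real polynomial of degree at most n. Then for every x₀ ∈ [−1, 1] with x₀ ≠ 0, |p'(x₀)| ≤ (n²/|x₀|) · ‖p‖_{[-1,1]}. -/
open Polynomial Real Finset

lemma U_eval_one' : ∀ n : ℕ, (Polynomial.Chebyshev.U ℝ (n:ℤ)).eval 1 = n + 1 := by
  intro n
  induction n using Nat.strong_induction_on with
  | _ n ih =>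
    match n, ih with
    | 0, _ => simp [Polynomial.Chebyshev.U_zero]
    | 1, _ => norm_num [Polynomial.Chebyshev.U_one]
    | (m+2), ih =>
      have h := Polynomial.Chebyshev.U_add_two ℝ (m:ℤ)
      have h1 := ih m (by omega)
      have h2 := ih (m+1) (by omega)
      push_cast at h h1 h2 ⊢
      rw [h]
      simp only [Polynomial.eval_sub, Polynomial.eval_mul, Polynomial.eval_ofNat,
        Polynomial.eval_X]
      rw [h2, h1]; ring

lemma natDegree_T_le : ∀ n : ℕ, (Polynomial.Chebyshev.T ℝ (n:ℤ)).natDegree ≤ n := by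
  intro n
  induction n using Nat.strong_induction_on with
  | _ n ih =>
    match n, ih with
    | 0, _ => simp [Polynomial.Chebyshev.T_zero]
    | 1, _ => simp [Polynomial.Chebyshev.T_one]
    | (m+2), ih =>
      have h := Polynomial.Chebyshev.T_add_two ℝ (m:ℤ)
      have h1 := ih m (by omega)
      have h2 := ih (m+1) (by omega)
      push_cast at h h1 h2 ⊢
      rw [h]
      refine (Polynomial.natDegree_sub_le _ _).trans ?_
      simp only [max_le_iff]
      refine ⟨(Polynomial.natDegree_mul_le).trans ?_, by omega⟩
      have : (2 * Polynomial.X : ℝ[X]).natDegree ≤ 1 := by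
        refine (Polynomial.natDegree_mul_le).trans ?_
        simp
      omega

lemma deriv_fprod {ι : Type*} [DecidableEq ι] (s : Finset ι) (f : ι → ℝ[X]) :
    Polynomial.derivative (∏ i ∈ s, f i)
      = ∑ i ∈ s, (∏ j ∈ s.erase i, f j) * Polynomial.derivative (f i) := by
  induction s using Finset.induction_on with
  | empty => simp
  | insert a s hx ih =>
    rw [Finset.prod_insert hx, Polynomial.derivative_mul, ih, Finset.sum_insert hx,
      Finset.erase_insert hx]
    simp only [Finset.mul_sum]
    rw [mul_comm (Polynomial.derivative (f a))]
    congr 1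
    refine Finset.sum_congr rfl fun i hi => ?_
    rw [Finset.erase_insert_of_ne (by rintro rfl; exact hx hi), Finset.prod_insert
      (fun h => hx (Finset.mem_of_mem_erase h))]
    ring


theorem markov_one (n : ℕ) (hn : 0 < n) (q : ℝ[X]) (hq : q.natDegree ≤ n)
    (M : ℝ) (hM : ∀ x ∈ Set.Icc (-1:ℝ) 1, |Polynomial.eval x q| ≤ M) :
    |Polynomial.eval 1 (Polynomial.derivative q)| ≤ (n:ℝ)^2 * M := by
  have hnR : (0:ℝ) < n := by exact_mod_cast hn
  set y : Fin (n+1) → ℝ := fun j => Real.cos (j * Real.pi / n) with hy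
  have hang : ∀ j : Fin (n+1), (j:ℝ) * Real.pi / n ∈ Set.Icc 0 Real.pi := by
    intro j
    constructor
    · positivity
    · rw [div_le_iff₀ hnR]
      have hj : (j:ℝ) ≤ n := by exact_mod_cast Nat.lt_succ_iff.mp j.isLt
      nlinarith [Real.pi_pos]
  have hanti : ∀ j k : Fin (n+1), j < k → y k < y j := by
    intro j k hjk
    refine Real.strictAntiOn_cos (hang j) (hang k) ?_
    have : (j:ℝ) < (k:ℝ) := by exact_mod_cast hjk
    have := Real.pi_pos
    gcongr
  have hinj : Set.InjOn y (Finset.univ : Finset (Fin (n+1))) := by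
    intro j _ k _ h
    rcases lt_trichotomy j k with hlt | heq | hgt
    · exact absurd h (ne_of_gt (hanti j k hlt))
    · exact heq
    · exact absurd h (ne_of_lt (hanti k j hgt))
  have hy0 : y 0 = 1 := by simp [hy]
  have hylt : ∀ j : Fin (n+1), j ≠ 0 → y j < 1 := by
    intro j hj
    have := hanti 0 j (by
      exact lt_of_le_of_ne (Fin.zero_le j) (Ne.symm hj))
    rwa [hy0] at this
  have hmem : ∀ j, y j ∈ Set.Icc (-1:ℝ) 1 := fun j => ⟨Real.neg_one_le_cos _, Real.cos_le_one _⟩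
  set d : Fin (n+1) → ℝ :=
    fun j => Polynomial.eval 1 (Polynomial.derivative (Lagrange.basis Finset.univ y j)) with hd
  have key : ∀ r : ℝ[X], r.natDegree ≤ n →
      Polynomial.eval 1 (Polynomial.derivative r) = ∑ j, Polynomial.eval (y j) r * d j := by
    intro r hr
    have hdeg : r.degree < ((Finset.univ : Finset (Fin (n+1))).card : WithBot ℕ) := by
      rw [Finset.card_univ, Fintype.card_fin]
      refine lt_of_le_of_lt Polynomial.degree_le_natDegree ?_
      exact_mod_cast Nat.lt_succ_of_le hr
    conv_lhs => rw [Lagrange.eq_interpolate hinj hdeg]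
    rw [Lagrange.interpolate_apply]
    rw [map_sum, Polynomial.eval_finset_sum]
    refine Finset.sum_congr rfl fun j _ => ?_
    rw [Polynomial.derivative_C_mul, Polynomial.eval_mul, Polynomial.eval_C]
  have hT : ∀ j : Fin (n+1),
      Polynomial.eval (y j) (Polynomial.Chebyshev.T ℝ (n:ℤ)) = (-1:ℝ)^(j:ℕ) := by
    intro j
    have h1 : y j = Real.cos ((j:ℝ) * Real.pi / n) := rfl
    rw [h1, Polynomial.Chebyshev.T_real_cos]
    have h2 : ((n:ℤ):ℝ) * ((j:ℝ) * Real.pi / n) = (j:ℝ) * Real.pi := by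
      push_cast; field_simp
    rw [h2]
    have := Real.cos_nat_mul_pi_sub 0 (j:ℕ)
    simpa using this
  have hT1 : Polynomial.eval 1 (Polynomial.derivative (Polynomial.Chebyshev.T ℝ (n:ℤ)))
      = (n:ℝ)^2 := by
    rw [Polynomial.Chebyshev.T_derivative_eq_U]
    have hu := U_eval_one' (n-1)
    have hcast : ((n-1:ℕ):ℤ) = (n:ℤ) - 1 := by omega
    rw [hcast] at hu
    rw [Polynomial.eval_mul]
    rw [hu]
    rw [Polynomial.eval_intCast, Nat.cast_sub hn]
    push_cast
    ring
  have hsum : ∑ j : Fin (n+1), (-1:ℝ)^(j:ℕ) * d j = (n:ℝ)^2 := by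
    rw [← hT1, key _ (natDegree_T_le n)]
    exact Finset.sum_congr rfl fun j _ => by rw [hT j]
  have hdformula : ∀ j : Fin (n+1), d j = ∑ i ∈ univ.erase j,
      (∏ k ∈ (univ.erase j).erase i, ((y j - y k)⁻¹ * (1 - y k))) * (y j - y i)⁻¹ := by
    intro j
    show Polynomial.eval 1 (Polynomial.derivative (Lagrange.basis univ y j)) = _
    rw [show Lagrange.basis univ y j = ∏ k ∈ univ.erase j, Lagrange.basisDivisor (y j) (y k)
      from rfl]
    rw [deriv_fprod, Polynomial.eval_finset_sum]
    refine Finset.sum_congr rfl fun i hi => ?_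
    rw [Polynomial.eval_mul, Polynomial.eval_prod]
    congr 1
    · refine Finset.prod_congr rfl fun k hk => ?_
      simp only [Lagrange.basisDivisor, Polynomial.eval_mul, Polynomial.eval_C,
        Polynomial.eval_sub, Polynomial.eval_X]
    · simp [Lagrange.basisDivisor]
  have hsign : ∀ j : Fin (n+1), 0 ≤ (-1:ℝ)^(j:ℕ) * d j := by
    intro j
    by_cases hj : j = 0
    · subst hj
      simp only [Fin.val_zero, pow_zero, one_mul]
      rw [hdformula]
      apply Finset.sum_nonneg
      intro i hi
      have hi0 : i ≠ 0 := (Finset.mem_erase.mp hi).1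
      have h1 : ∏ k ∈ ((univ.erase (0: Fin (n+1))).erase i), ((y 0 - y k)⁻¹ * (1 - y k)) = 1 := by
        apply Finset.prod_eq_one
        intro k hk
        have hk0 : k ≠ 0 := (Finset.mem_erase.mp (Finset.mem_of_mem_erase hk)).1
        have hne : (1:ℝ) - y k ≠ 0 := sub_ne_zero.mpr (ne_of_gt (hylt k hk0))
        rw [hy0]
        field_simp
      rw [h1, one_mul, hy0]
      have := hylt i hi0
      have : (0:ℝ) ≤ 1 - y i := by linarith
      positivity
    · have h0mem : (0 : Fin (n+1)) ∈ univ.erase j := Finset.mem_erase.mpr ⟨Ne.symm hj, Finset.mem_univ _⟩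
      have hzero : ∀ i ∈ univ.erase j, i ≠ 0 →
          (∏ k ∈ (univ.erase j).erase i, ((y j - y k)⁻¹ * (1 - y k))) * (y j - y i)⁻¹ = 0 := by
        intro i hi hi0
        have h0 : (0:Fin (n+1)) ∈ (univ.erase j).erase i :=
          Finset.mem_erase.mpr ⟨Ne.symm hi0, h0mem⟩
        rw [Finset.prod_eq_zero h0 (by rw [hy0]; ring), zero_mul]
      have hdj : d j = (∏ k ∈ (univ.erase j).erase 0, ((y j - y k)⁻¹ * (1 - y k))) * (y j - y 0)⁻¹ := by
        rw [hdformula]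
        exact Finset.sum_eq_single_of_mem 0 h0mem hzero
      set P := ∏ k ∈ univ.erase j, (y j - y k) with hPdef
      have hB : (∏ k ∈ (univ.erase j).erase 0, (y j - y k)⁻¹) * (y j - y 0)⁻¹ = P⁻¹ := by
        rw [hPdef, ← Finset.prod_inv_distrib]
        exact Finset.prod_erase_mul _ _ h0mem
      have heq : d j = P⁻¹ * (∏ k ∈ (univ.erase j).erase 0, (1 - y k)) := by
        rw [hdj, Finset.prod_mul_distrib, mul_right_comm, hB]
      have hA : 0 ≤ ∏ k ∈ (univ.erase j).erase 0, (1 - y k) := by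
        apply Finset.prod_nonneg
        intro k hk
        have hk0 : k ≠ 0 := (Finset.mem_erase.mp hk).1
        linarith [hylt k hk0]
      have hs1 : (univ.erase j).filter (fun k => k < j) = Finset.Iio j := by
        ext k
        simp only [Finset.mem_filter, Finset.mem_erase, Finset.mem_univ, Finset.mem_Iio, true_and,
          and_true]
        exact ⟨fun h => h.2, fun h => ⟨ne_of_lt h, h⟩⟩
      have hpos2 : 0 < ∏ k ∈ (univ.erase j).filter (fun k => ¬ k < j), (y j - y k) := by
        apply Finset.prod_pos
        intro k hk
        obtain ⟨hk1, hk2⟩ := Finset.mem_filter.mp hk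
        have hlt : j < k := lt_of_le_of_ne (not_lt.mp hk2) (Ne.symm (Finset.mem_erase.mp hk1).1)
        linarith [hanti j k hlt]
      have hpos1 : 0 < ∏ k ∈ Finset.Iio j, (y k - y j) := by
        apply Finset.prod_pos
        intro k hk
        linarith [hanti k j (Finset.mem_Iio.mp hk)]
      have h1 : ∏ k ∈ Finset.Iio j, (y j - y k) = (-1:ℝ)^(j:ℕ) * ∏ k ∈ Finset.Iio j, (y k - y j) := by
        calc ∏ k ∈ Finset.Iio j, (y j - y k) = ∏ k ∈ Finset.Iio j, ((-1) * (y k - y j)) :=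
              Finset.prod_congr rfl fun k _ => by ring
          _ = (-1:ℝ)^(Finset.Iio j).card * ∏ k ∈ Finset.Iio j, (y k - y j) := by
              rw [Finset.prod_mul_distrib, Finset.prod_const]
          _ = (-1:ℝ)^(j:ℕ) * ∏ k ∈ Finset.Iio j, (y k - y j) := by rw [Fin.card_Iio]
      have hPsplit : P = ((-1:ℝ)^(j:ℕ) * ∏ k ∈ Finset.Iio j, (y k - y j)) *
          ∏ k ∈ (univ.erase j).filter (fun k => ¬ k < j), (y j - y k) := by
        rw [hPdef, ← Finset.prod_filter_mul_prod_filter_not (univ.erase j) (fun k => k < j),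
          hs1, h1]
      have hsq : ((-1:ℝ)^(j:ℕ)) * ((-1:ℝ)^(j:ℕ)) = 1 := by
        rw [← pow_add, ← two_mul, pow_mul]
        norm_num
      have hPsign : 0 < (-1:ℝ)^(j:ℕ) * P := by
        rw [hPsplit]
        calc (0:ℝ) < (∏ k ∈ Finset.Iio j, (y k - y j)) *
              ∏ k ∈ (univ.erase j).filter (fun k => ¬ k < j), (y j - y k) :=
              mul_pos hpos1 hpos2
          _ = (-1:ℝ)^(j:ℕ) * (((-1:ℝ)^(j:ℕ) * ∏ k ∈ Finset.Iio j, (y k - y j)) *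
              ∏ k ∈ (univ.erase j).filter (fun k => ¬ k < j), (y j - y k)) := by
              rw [← mul_assoc, ← mul_assoc, hsq, one_mul]
      have hPinv : 0 ≤ (-1:ℝ)^(j:ℕ) * P⁻¹ := by
        have h2 := inv_pos.mpr hPsign
        rw [mul_inv] at h2
        have h3 : ((-1:ℝ)^(j:ℕ))⁻¹ = (-1:ℝ)^(j:ℕ) := by
          rw [← inv_pow]
          norm_num
        rw [h3] at h2
        exact h2.le
      rw [heq]
      calc (0:ℝ) ≤ ((-1:ℝ)^(j:ℕ) * P⁻¹) * ∏ k ∈ (univ.erase j).erase 0, (1 - y k) :=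
            mul_nonneg hPinv hA
        _ = (-1:ℝ)^(j:ℕ) * (P⁻¹ * ∏ k ∈ (univ.erase j).erase 0, (1 - y k)) := by ring
  have hM0 : (0:ℝ) ≤ M := le_trans (abs_nonneg _) (hM 0 (by norm_num))
  have habs : ∀ j : Fin (n+1), |d j| = (-1:ℝ)^(j:ℕ) * d j := by
    intro j
    rw [← abs_of_nonneg (hsign j), abs_mul, abs_pow, abs_neg, abs_one, one_pow, one_mul]
  calc |Polynomial.eval 1 (Polynomial.derivative q)|
      = |∑ j : Fin (n+1), Polynomial.eval (y j) q * d j| := by rw [key q hq]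
    _ ≤ ∑ j : Fin (n+1), |Polynomial.eval (y j) q * d j| := Finset.abs_sum_le_sum_abs _ _
    _ ≤ ∑ j : Fin (n+1), M * ((-1:ℝ)^(j:ℕ) * d j) := by
        refine Finset.sum_le_sum fun j _ => ?_
        rw [abs_mul, ← habs j]
        exact mul_le_mul_of_nonneg_right (hM _ (hmem j)) (abs_nonneg _)
    _ = M * ∑ j : Fin (n+1), (-1:ℝ)^(j:ℕ) * d j := by rw [Finset.mul_sum]
    _ = (n:ℝ)^2 * M := by rw [hsum]; ring

theorem stmt15 (n : ℕ) (p : Polynomial ℝ) (hdeg : p.natDegree ≤ n)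
    (x₀ : ℝ) (hx₀ : x₀ ∈ Set.Icc (-1 : ℝ) 1) (hx₀0 : x₀ ≠ 0) :
    |p.derivative.eval x₀| ≤
      (n : ℝ) ^ 2 / |x₀| * sSup ((fun x => |p.eval x|) '' Set.Icc (-1 : ℝ) 1) := by
  set M := sSup ((fun x => |p.eval x|) '' Set.Icc (-1 : ℝ) 1) with hMdef
  have hbdd : BddAbove ((fun x => |p.eval x|) '' Set.Icc (-1:ℝ) 1) :=
    (isCompact_Icc.image_of_continuousOn ((p.continuous.abs).continuousOn)).bddAbove
  have hMle : ∀ x ∈ Set.Icc (-1:ℝ) 1, |p.eval x| ≤ M := fun x hx =>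
    le_csSup hbdd ⟨x, hx, rfl⟩
  obtain ⟨hx1, hx2⟩ := hx₀
  have hx₀abs : |x₀| ≤ 1 := abs_le.mpr ⟨hx1, hx2⟩
  rcases Nat.eq_zero_or_pos n with hn | hn
  · subst hn
    have : p = Polynomial.C (p.coeff 0) := Polynomial.eq_C_of_natDegree_le_zero hdeg
    rw [this]
    simp
  · set q := p.comp (Polynomial.C x₀ * Polynomial.X) with hq
    have hqdeg : q.natDegree ≤ n := by
      refine (Polynomial.natDegree_comp_le).trans ?_
      rw [Polynomial.natDegree_C_mul_X x₀ hx₀0, mul_one]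
      exact hdeg
    have hqval : ∀ x ∈ Set.Icc (-1:ℝ) 1, |q.eval x| ≤ M := by
      intro x hx
      rw [hq, Polynomial.eval_comp, Polynomial.eval_mul, Polynomial.eval_C, Polynomial.eval_X]
      apply hMle
      have habs : |x₀ * x| ≤ 1 := by
        rw [abs_mul]
        exact mul_le_one₀ hx₀abs (abs_nonneg _) (abs_le.mpr ⟨hx.1, hx.2⟩)
      exact Set.mem_Icc.mpr (abs_le.mp habs)
    have hder : q.derivative.eval 1 = x₀ * p.derivative.eval x₀ := by
      rw [hq, Polynomial.derivative_comp]
      simp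
    have hmain := markov_one n hn q hqdeg M hqval
    rw [hder, abs_mul] at hmain
    rw [div_mul_eq_mul_div, le_div_iff₀ (abs_pos.mpr hx₀0)]
    calc |Polynomial.eval x₀ (Polynomial.derivative p)| * |x₀|
        = |x₀| * |Polynomial.eval x₀ (Polynomial.derivative p)| := mul_comm _ _
      _ ≤ (n:ℝ)^2 * M := hmain
end
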